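/- Let f : ℝⁿ → ℝ be convex and differentiable with Hölder continuous gradient: ‖∇f(y) − ∇f(x)‖_* ≤ L_ν ‖y − x‖^ν for some ν ∈ [0,1] and all x, y. Then for every δ > 0, setting L = L_ν · (L_ν (1−ν) / (2δ(1+ν)))^((1−ν)/(1+ν)), one has for all x, y: 0 ≤ f(y) − f(x) − ⟨∇f(x), y − x⟩ ≤ (L/2)‖y − x‖² + δ. -/

import Mathlib

open RealInnerProductSpace

/-- Hölder-continuous gradient yields a (δ, L)-oracle with
L = L_ν · (L_ν(1−ν)/(2δ(1+ν)))^((1−ν)/(1+ν)). -/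
theorem stmt0 {n : ℕ} (f : EuclideanSpace ℝ (Fin n) → ℝ)
    (g : EuclideanSpace ℝ (Fin n) → EuclideanSpace ℝ (Fin n))
    (Nrm Dnrm : EuclideanSpace ℝ (Fin n) → ℝ)
    (hNrm_nonneg : ∀ x, 0 ≤ Nrm x)
    (hNrm_smul : ∀ (c : ℝ) x, Nrm (c • x) = |c| * Nrm x)
    (hdual : ∀ s y, |⟪s, y⟫| ≤ Dnrm s * Nrm y)
    (hconv : ConvexOn ℝ Set.univ f)
    (hgrad : ∀ x, HasGradientAt f (g x) x)
    (ν Lν : ℝ) (hν : ν ∈ Set.Icc (0:ℝ) 1) (hLν : 0 < Lν)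
    (hHolder : ∀ x y, Dnrm (g y - g x) ≤ Lν * (Nrm (y - x)) ^ ν)
    (δ : ℝ) (hδ : 0 < δ) :
    ∀ x y, 0 ≤ f y - f x - ⟪g x, y - x⟫ ∧
      f y - f x - ⟪g x, y - x⟫ ≤
        (Lν * ((Lν * (1 - ν)) / (2 * δ * (1 + ν))) ^ ((1 - ν) / (1 + ν))) / 2
          * (Nrm (y - x)) ^ 2 + δ := by
  obtain ⟨hν0, hν1⟩ := hν
  have h1ν : (0:ℝ) < 1 + ν := by linarith
  intro x y
  set v := y - x with hv
  have hxv : x + (1:ℝ) • v = y := by rw [hv]; simp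
  -- derivative of f along the line
  have hline : ∀ t : ℝ, HasDerivAt (fun s : ℝ => f (x + s • v)) ⟪g (x + t • v), v⟫ t := by
    intro t
    have h1 : HasDerivAt (fun s : ℝ => x + s • v) v t := by
      simpa using ((hasDerivAt_id t).smul_const v).const_add x
    have h2 := ((hgrad (x + t • v)).hasFDerivAt).comp_hasDerivAt t h1
    simpa [InnerProductSpace.toDual_apply_apply, Function.comp_def] using h2
  constructor
  · -- lower bound from convexity
    have hd : HasDerivAt (fun s : ℝ => f (x + s • v)) ⟪g x, v⟫ 0 := by
      simpa using hline 0
    have hslope := hasDerivAt_iff_tendsto_slope.mp hd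
    have hmono : Filter.Tendsto (slope (fun s : ℝ => f (x + s • v)) 0) (nhdsWithin 0 (Set.Ioi 0))
        (nhds ⟪g x, v⟫) :=
      hslope.mono_left (nhdsWithin_mono 0 (fun t ht => ne_of_gt ht))
    have hle : ⟪g x, v⟫ ≤ f y - f x := by
      refine le_of_tendsto hmono ?_
      filter_upwards [Ioo_mem_nhdsGT_of_mem (by constructor <;> norm_num : (0:ℝ) ∈ Set.Ico 0 1)]
        with t ht
      have hconvt := hconv.2 (Set.mem_univ x) (Set.mem_univ y)
        (by linarith [ht.2] : (0:ℝ) ≤ 1 - t) (le_of_lt ht.1) (by ring)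
      have hxt : (1 - t) • x + t • y = x + t • v := by rw [hv]; module
      rw [hxt] at hconvt
      simp only [smul_eq_mul] at hconvt
      have hsl : slope (fun s : ℝ => f (x + s • v)) 0 t
          = (f (x + t • v) - f (x + (0:ℝ) • v)) / t := by
        simp [slope_def_field]
      rw [hsl, div_le_iff₀ ht.1]
      have h0 : x + (0:ℝ) • v = x := by simp
      rw [h0]
      nlinarith [hconvt]
    linarith
  · -- upper bound
    set R := Nrm v with hR
    have hRn : 0 ≤ R := hNrm_nonneg v
    set ψ : ℝ → ℝ := fun t => f (x + t • v) - f x - t * ⟪g x, v⟫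
      - Lν * R ^ (1 + ν) * t ^ (1 + ν) / (1 + ν) with hψ
    have key : f y - f x - ⟪g x, v⟫ ≤ Lν * R ^ (1 + ν) / (1 + ν) := by
      have hcont : ContinuousOn ψ (Set.Icc 0 1) := by
        apply ContinuousOn.sub
        · apply ContinuousOn.sub
          · apply ContinuousOn.sub
            · exact (continuous_iff_continuousAt.2
                fun t => (hline t).continuousAt).continuousOn
            · exact continuousOn_const
          · exact (continuous_id.mul continuous_const).continuousOn
        · apply ContinuousOn.div_const
          apply ContinuousOn.mul continuousOn_const
          exact fun t _ => (Real.continuousAt_rpow_const t (1+ν)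
            (Or.inr (le_of_lt h1ν))).continuousWithinAt
      have hder : ∀ t ∈ interior (Set.Icc (0:ℝ) 1),
          HasDerivWithinAt ψ
            ((fun t => ⟪g (x + t • v), v⟫ - ⟪g x, v⟫ - Lν * R ^ (1 + ν) * t ^ ν) t)
            (interior (Set.Icc (0:ℝ) 1)) t := by
        intro t ht
        rw [interior_Icc] at ht
        have hd1 : HasDerivAt (fun s : ℝ => s ^ (1+ν)) ((1+ν) * t ^ ν) t := by
          have h := Real.hasDerivAt_rpow_const (x := t) (p := 1+ν) (Or.inl (ne_of_gt ht.1))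
          have he : 1 + ν - 1 = ν := by ring
          rwa [he] at h
        have hd2 : HasDerivAt ψ
            (⟪g (x + t • v), v⟫ - ⟪g x, v⟫ - Lν * R ^ (1 + ν) * t ^ ν) t := by
          have h := (((hline t).sub_const (f x)).sub
              (hasDerivAt_mul_const ⟪g x, v⟫)).sub
            ((hd1.const_mul (Lν * R ^ (1 + ν))).div_const (1 + ν))
          rw [mul_div_assoc, mul_div_cancel_left₀ _ h1ν.ne'] at h
          exact h
        exact hd2.hasDerivWithinAt
      have hderne : ∀ t ∈ interior (Set.Icc (0:ℝ) 1),
          ⟪g (x + t • v), v⟫ - ⟪g x, v⟫ - Lν * R ^ (1 + ν) * t ^ ν ≤ 0 := by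
        intro t ht
        rw [interior_Icc] at ht
        have h1 : ⟪g (x + t • v), v⟫ - ⟪g x, v⟫ = ⟪g (x + t • v) - g x, v⟫ := by
          rw [inner_sub_left]
        have h2 : ⟪g (x + t • v) - g x, v⟫ ≤ Dnrm (g (x + t • v) - g x) * R :=
          le_trans (le_abs_self _) (hdual _ _)
        have h3 : Dnrm (g (x + t • v) - g x) ≤ Lν * (t ^ ν * R ^ ν) := by
          have h := hHolder x (x + t • v)
          have h4 : x + t • v - x = t • v := by abel
          rw [h4, hNrm_smul, abs_of_pos ht.1] at h
          rwa [Real.mul_rpow (le_of_lt ht.1) hRn] at h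
        have h5 : Dnrm (g (x + t • v) - g x) * R ≤ Lν * (t ^ ν * R ^ ν) * R :=
          mul_le_mul_of_nonneg_right h3 hRn
        have h6 : Lν * (t ^ ν * R ^ ν) * R = Lν * R ^ (1 + ν) * t ^ ν := by
          rw [Real.rpow_add' hRn (ne_of_gt h1ν), Real.rpow_one]
          ring
        have h7 := le_trans h2 h5
        rw [h6] at h7
        linarith [h1 ▸ h7]
      have hanti := antitoneOn_of_hasDerivWithinAt_nonpos (convex_Icc (0:ℝ) 1)
        hcont hder hderne
      have h10 := hanti (Set.left_mem_Icc.2 zero_le_one)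
        (Set.right_mem_Icc.2 zero_le_one) zero_le_one
      have hψ0 : ψ 0 = 0 := by
        simp [hψ, Real.zero_rpow (ne_of_gt h1ν)]
      have hψ1 : ψ 1 = f y - f x - ⟪g x, v⟫ - Lν * R ^ (1 + ν) / (1 + ν) := by
        have hxv2 : x + v = y := by rw [hv]; simp
        simp [hψ, hxv2, Real.one_rpow]
      rw [hψ0, hψ1] at h10
      linarith
    -- scalar balancing
    rcases eq_or_lt_of_le hν1 with hcase | hcase
    · -- ν = 1
      subst hcase
      have hs : ((Lν * (1 - 1)) / (2 * δ * (1 + 1))) ^ ((1 - 1) / (1 + 1) : ℝ) = 1 := by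
        norm_num
      rw [hs]
      have hRe : R ^ ((1:ℝ) + 1) = R ^ (2:ℕ) := by
        rw [show (1:ℝ) + 1 = ((2:ℕ):ℝ) by norm_num, Real.rpow_natCast]
      rw [hRe] at key
      have : Lν * R ^ (2:ℕ) / (1 + 1) = Lν * 1 / 2 * R ^ 2 := by ring
      linarith [key, this ▸ key]
    · -- ν < 1
      have h1νm : (0:ℝ) < 1 - ν := by linarith
      set K : ℝ := (Lν * (1 - ν)) / (2 * δ * (1 + ν)) with hK
      set e : ℝ := (1 - ν) / (1 + ν) with he
      have hKpos : 0 < K := by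
        apply div_pos (by positivity) (by positivity)
      set c : ℝ := Lν / (1 + ν) with hc
      have hcpos : 0 < c := by positivity
      set w1 : ℝ := (1 + ν) / 2 with hw1
      set w2 : ℝ := (1 - ν) / 2 with hw2
      have hw1n : 0 ≤ w1 := by positivity
      have hw2n : 0 ≤ w2 := by positivity
      set α : ℝ := c * K ^ e with hα
      set β : ℝ := c / K with hβ
      have hαn : 0 ≤ α := by positivity
      have hβn : 0 ≤ β := by positivity
      have amgm := Real.geom_mean_le_arith_mean2_weighted hw1n hw2n
        (mul_nonneg hαn (by positivity : (0:ℝ) ≤ R ^ 2)) hβn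
        (by rw [hw1, hw2]; ring)
      -- LHS identity
      have hKw2ne : K ^ w2 ≠ 0 := by positivity
      have hLHS : (α * R ^ 2) ^ w1 * β ^ w2 = c * R ^ (1 + ν) := by
        have e1 : (α * R ^ 2) ^ w1 = c ^ w1 * K ^ w2 * R ^ (1 + ν) := by
          rw [Real.mul_rpow hαn (by positivity), Real.mul_rpow hcpos.le
            (Real.rpow_nonneg hKpos.le _), ← Real.rpow_natCast R 2,
            ← Real.rpow_mul hKpos.le, ← Real.rpow_mul hRn]
          have he1 : e * w1 = w2 := by
            rw [he, hw1, hw2]; field_simp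
          have he2 : ((2:ℕ):ℝ) * w1 = 1 + ν := by
            rw [hw1]; push_cast; ring
          rw [he1, he2]
        have e2 : β ^ w2 = c ^ w2 / K ^ w2 := by
          rw [hβ, Real.div_rpow hcpos.le hKpos.le]
        rw [e1, e2]
        have hcc : c ^ w1 * c ^ w2 = c := by
          rw [← Real.rpow_add hcpos, show w1 + w2 = 1 by rw [hw1, hw2]; ring,
            Real.rpow_one]
        field_simp
        calc c ^ w1 * R ^ (1 + ν) * c ^ w2
            = (c ^ w1 * c ^ w2) * R ^ (1 + ν) := by ring
          _ = R ^ (1 + ν) * c := by rw [hcc]; ring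
      -- RHS identity
      have hRHS : w1 * (α * R ^ 2) + w2 * β = (Lν * K ^ e) / 2 * R ^ 2 + δ := by
        have hβδ : w2 * β = δ := by
          rw [hw2, hβ, hc, hK]
          field_simp
        have hα2 : w1 * (α * R ^ 2) = (Lν * K ^ e) / 2 * R ^ 2 := by
          rw [hw1, hα, hc]
          field_simp
        rw [hβδ, hα2]
      rw [hLHS, hRHS] at amgm
      have hkey2 : Lν * R ^ (1 + ν) / (1 + ν) = c * R ^ (1 + ν) := by
        rw [hc]; ring
      rw [hkey2] at key
      linarith
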